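/- Let K₁/k and K₂/k be purely inseparable subextensions of finite exponent of a common extension, which are k-linearly disjoint. If B₁ is an r-basis of K₁/k and B₂ is an r-basis of K₂/k, then B₁ ∪ B₂ is an r-basis of K₁(K₂)/k, and B₁ is an r-basis of K₁(K₂)/K₂. -/

import Mathlib

/-!
Common definitions: purely inseparable extension theory (r-bases, degree of
irrationality, relative perfect closure, modularity), following Fliouet,
"Extensions absolument lq-finies".
-/

open IntermediateField

noncomputable section

/-- `k(K^p)`: the intermediate field of `K/k` generated by the `p`-th powers of `K`. -/
def pClosure (k K : Type*) [Field k] [Field K] [Algebra k K] (p : ℕ) : IntermediateField k K :=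
  adjoin k {x : K | ∃ y : K, y ^ p = x}

/-- `k(K^{p^n})`. -/
def pnClosure (k K : Type*) [Field k] [Field K] [Algebra k K] (p n : ℕ) : IntermediateField k K :=
  adjoin k {x : K | ∃ y : K, y ^ p ^ n = x}

/-- `k(L^p)` for an intermediate field `L` of `Ω/k`. -/
def pClosureOf {k Ω : Type*} [Field k] [Field Ω] [Algebra k Ω] (p : ℕ)
    (L : IntermediateField k Ω) : IntermediateField k Ω :=
  adjoin k {x : Ω | ∃ y ∈ L, y ^ p = x}

/-- `B` is `r`-free over the intermediate field `L` (typically `L = k(K^p)`):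
no `x ∈ B` belongs to `L(B \ {x})`. -/
def RFreeOver {k K : Type*} [Field k] [Field K] [Algebra k K]
    (L : IntermediateField k K) (B : Set K) : Prop :=
  ∀ x ∈ B, x ∉ adjoin L (B \ {x})

/-- `B` is an `r`-basis of `K/k` : `K = k(K^p)(B)` and `B` is `r`-free over `k(K^p)`. -/
def RBasis (k K : Type*) [Field k] [Field K] [Algebra k K] (p : ℕ) (B : Set K) : Prop :=
  adjoin (pClosure k K p) B = ⊤ ∧ RFreeOver (pClosure k K p) B

/-- `B` is an `r`-basis of `L/F` where `F ≤ L` are intermediate fields of `Ω/k`: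
`L = F(L^p)(B)` and no `x ∈ B` lies in `F(L^p)(B \ {x})`. -/
def RBasisRel {k Ω : Type*} [Field k] [Field Ω] [Algebra k Ω] (p : ℕ)
    (F L : IntermediateField k Ω) (B : Set Ω) : Prop :=
  B ⊆ (L : Set Ω) ∧ F ⊔ pClosureOf p L ⊔ adjoin k B = L ∧
    ∀ x ∈ B, x ∉ F ⊔ pClosureOf p L ⊔ adjoin k (B \ {x})

/-- The degree of irrationality of a bounded-exponent extension:
the cardinality of an `r`-basis of `K/k`. -/
def diCard (k K : Type*) [Field k] [Field K] [Algebra k K] (p : ℕ) : Cardinal :=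
  sInf {c : Cardinal | ∃ B : Set K, RBasis k K p B ∧ Cardinal.mk B = c}

/-- `k^{p^{-n}} ∩ K = {x ∈ K | x^{p^n} ∈ k}`. -/
def expleq (k K : Type*) [Field k] [Field K] [Algebra k K] (p n : ℕ) : IntermediateField k K :=
  adjoin k {x : K | x ^ p ^ n ∈ (algebraMap k K).range}

/-- The degree of irrationality `di(K/k) = sup_n di(k^{p^{-n}} ∩ K / k)`. -/
def di (k K : Type*) [Field k] [Field K] [Algebra k K] (p : ℕ) : Cardinal :=
  ⨆ n : ℕ, diCard k (expleq k K p n) p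

/-- The relative perfect closure `rp(K/k)`: the largest intermediate field `L`
with `k(L^p) = L`. -/
def rp (k K : Type*) [Field k] [Field K] [Algebra k K] (p : ℕ) : IntermediateField k K :=
  sSup {L : IntermediateField k K | pClosureOf p L = L}

/-- `K/k` has unbounded exponent. -/
def UnboundedExp (k K : Type*) [Field k] [Field K] [Algebra k K] (p : ℕ) : Prop :=
  ∀ e : ℕ, ∃ x : K, x ^ p ^ e ∉ (algebraMap k K).range

/-- `K^{p^n}` as a subfield of `K`. -/
def pnPowers (K : Type*) [Field K] (p n : ℕ) : Subfield K :=
  Subfield.closure {x : K | ∃ y : K, y ^ p ^ n = x}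

/-- `K/k` is modular: for each `n`, `K^{p^n}` and `k` are linearly disjoint over
`K^{p^n} ∩ k`, i.e. every finite family of elements of `K^{p^n}` that is linearly
independent over `K^{p^n} ∩ k` remains linearly independent over `k`. -/
def Modular (k K : Type*) [Field k] [Field K] [Algebra k K] (p : ℕ) : Prop :=
  ∀ n : ℕ, ∀ s : Finset K, (↑s : Set K) ⊆ (pnPowers K p n : Set K) →
    LinearIndependent ↥(pnPowers K p n ⊓ (algebraMap k K).fieldRange)
      (fun x : s => (x : K)) →
    LinearIndependent ↥((algebraMap k K).fieldRange) (fun x : s => (x : K))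

/-- The exponent `o(a, F)` of `a` over an intermediate field `F`:
the least `m` with `a^{p^m} ∈ F`. -/
def expOf {k K : Type*} [Field k] [Field K] [Algebra k K] (p : ℕ)
    (F : IntermediateField k K) (a : K) : ℕ :=
  sInf {m : ℕ | a ^ p ^ m ∈ F}

/-- An intermediate field `L` of `K/k` is equiexponential of exponent `e` over `k`:
there is an `r`-basis `G` of `L/k` with `o(a, k(G \ {a})) = o(a, k) = e` for all `a ∈ G`. -/
def EquiExpOf {k K : Type*} [Field k] [Field K] [Algebra k K] (p : ℕ)
    (e : ℕ) (L : IntermediateField k K) : Prop :=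
  ∃ G : Set K, RBasisRel p ⊥ L G ∧
    ∀ a ∈ G, expOf p (adjoin k (G \ {a})) a = e ∧ expOf p (⊥ : IntermediateField k K) a = e

end

section Aux

open IntermediateField

variable {k Ω : Type*} [Field k] [Field Ω] [Algebra k Ω] {p : ℕ}

lemma pClosureOf_le_self (L : IntermediateField k Ω) : pClosureOf p L ≤ L := by
  rw [pClosureOf, adjoin_le_iff]
  rintro x ⟨y, hy, rfl⟩
  exact pow_mem hy p

lemma pClosureOf_mono {L L' : IntermediateField k Ω} (h : L ≤ L') :
    pClosureOf p L ≤ pClosureOf p L' := by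
  apply IntermediateField.adjoin.mono
  rintro x ⟨y, hy, rfl⟩
  exact ⟨y, h hy, rfl⟩

lemma pow_mem_pClosureOf {L : IntermediateField k Ω} {y : Ω} (hy : y ∈ L) :
    y ^ p ∈ pClosureOf p L :=
  IntermediateField.subset_adjoin _ _ ⟨y, hy, rfl⟩

lemma pClosureOf_sup_le [Fact p.Prime] [CharP k p] (K₁ K₂ : IntermediateField k Ω) :
    pClosureOf p (K₁ ⊔ K₂) ≤ pClosureOf p K₁ ⊔ pClosureOf p K₂ := by
  haveI : CharP Ω p := charP_of_injective_algebraMap (algebraMap k Ω).injective p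
  haveI : ExpChar Ω p := ExpChar.prime Fact.out
  set T := pClosureOf p K₁ ⊔ pClosureOf p K₂ with hT
  have key : ∀ y ∈ K₁ ⊔ K₂, y ^ p ∈ T := by
    let S : IntermediateField k Ω :=
      { carrier := {y : Ω | y ^ p ∈ T}
        mul_mem' := fun {a b} ha hb => by
          show (a * b) ^ p ∈ T
          rw [mul_pow]; exact mul_mem ha hb
        one_mem' := by
          show (1 : Ω) ^ p ∈ T
          rw [one_pow]; exact one_mem T
        add_mem' := fun {a b} ha hb => by
          show (a + b) ^ p ∈ T
          rw [add_pow_char]; exact add_mem ha hb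
        zero_mem' := by
          show (0 : Ω) ^ p ∈ T
          rw [zero_pow (Fact.out : p.Prime).ne_zero]; exact zero_mem T
        algebraMap_mem' := fun c => by
          show (algebraMap k Ω c) ^ p ∈ T
          rw [← map_pow]; exact T.algebraMap_mem _
        inv_mem' := fun a ha => by
          show a⁻¹ ^ p ∈ T
          rw [inv_pow]; exact inv_mem ha }
    intro y hy
    have hle : K₁ ⊔ K₂ ≤ S := by
      apply sup_le
      · intro z hz
        exact (le_sup_left : pClosureOf p K₁ ≤ T) (pow_mem_pClosureOf hz)
      · intro z hz
        exact (le_sup_right : pClosureOf p K₂ ≤ T) (pow_mem_pClosureOf hz)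
    exact hle hy
  rw [pClosureOf, adjoin_le_iff]
  rintro x ⟨y, hy, rfl⟩
  exact key y hy

set_option synthInstance.maxHeartbeats 1000000 in
set_option maxHeartbeats 1000000 in
/-- Key consequence of linear disjointness: if `M ≤ K₁`, then `(M ⊔ K₂) ∩ K₁ ≤ M`. -/
lemma mem_of_mem_sup_of_linearDisjoint [IsPurelyInseparable k Ω]
    {K₁ K₂ M : IntermediateField k Ω}
    (hdisj : K₁.LinearDisjoint K₂) (hM : M ≤ K₁) {x : Ω}
    (hx : x ∈ K₁) (hxM : x ∈ M ⊔ K₂) : x ∈ M := by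
  classical
  haveI : Algebra.IsAlgebraic k Ω := Algebra.IsIntegral.isAlgebraic
  -- Step 1: `x` lies in the `M`-span of `K₂`.
  have hspan : x ∈ Submodule.span ↥M ((K₂ : Set Ω)) := by
    have h1 : x ∈ (M ⊔ K₂).toSubalgebra := (IntermediateField.mem_toSubalgebra _ _).2 hxM
    rw [IntermediateField.sup_toSubalgebra_of_isAlgebraic M K₂ (Or.inl inferInstance)] at h1
    -- build the span as a subalgebra
    let Sa : Subalgebra k Ω :=
      { carrier := (Submodule.span ↥M ((K₂ : Set Ω)) : Set Ω)
        mul_mem' := fun {a b} ha hb => by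
          have ha' : a ∈ Submodule.span ↥M ((K₂ : Set Ω)) := ha
          have hb' : b ∈ Submodule.span ↥M ((K₂ : Set Ω)) := hb
          show a * b ∈ Submodule.span ↥M ((K₂ : Set Ω))
          have h : a * b ∈ Submodule.span ↥M ((K₂ : Set Ω)) *
              Submodule.span ↥M ((K₂ : Set Ω)) := Submodule.mul_mem_mul ha' hb'
          rw [Submodule.span_mul_span] at h
          refine Submodule.span_le.2 ?_ h
          rintro z hz
          rw [Set.mem_mul] at hz
          obtain ⟨u, hu, v, hv, rfl⟩ := hz
          exact Submodule.subset_span (mul_mem hu hv)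
        one_mem' := Submodule.subset_span (one_mem K₂)
        add_mem' := fun {a b} ha hb => add_mem ha hb
        zero_mem' := zero_mem _
        algebraMap_mem' := fun c => by
          have h1 : (1 : Ω) ∈ Submodule.span ↥M ((K₂ : Set Ω)) :=
            Submodule.subset_span (one_mem K₂)
          have := Submodule.smul_mem _ (⟨algebraMap k Ω c, M.algebraMap_mem c⟩ : ↥M) h1
          simpa [Algebra.smul_def] using this }
    have hle : M.toSubalgebra ⊔ K₂.toSubalgebra ≤ Sa := by
      apply sup_le
      · intro z hz
        have h1 : (1 : Ω) ∈ Submodule.span ↥M ((K₂ : Set Ω)) :=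
          Submodule.subset_span (one_mem K₂)
        have := Submodule.smul_mem _ (⟨z, hz⟩ : ↥M) h1
        exact (by simpa [Algebra.smul_def] using this : z ∈ Submodule.span ↥M ((K₂ : Set Ω)))
      · intro z hz
        exact Submodule.subset_span hz
    exact hle h1
  -- Step 2: a `k`-basis of `K₂` stays linearly independent over `K₁`.
  let b := Module.Basis.ofVectorSpace k ↥K₂
  let v : Module.Basis.ofVectorSpaceIndex k ↥K₂ → Ω := algebraMap ↥K₂ Ω ∘ ⇑b
  have hli : LinearIndependent ↥K₁ v := hdisj.linearIndependent_right' b.linearIndependent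
  have hvcoe : ∀ i, v i = ↑(b i) := fun i => rfl
  -- every element of `K₂` is in the span (over any scalars between `k` and `Ω`) of `v`
  have hK2span : ∀ {y : Ω}, y ∈ K₂ → y ∈ Submodule.span k (Set.range v) := by
    intro y hy
    have h1 : (⟨y, hy⟩ : ↥K₂) ∈ Submodule.span k (Set.range ⇑b) := by
      rw [b.span_eq]; trivial
    have h2 := Submodule.mem_map_of_mem (f := K₂.val.toLinearMap) h1
    rw [Submodule.map_span, ← Set.range_comp] at h2
    exact h2
  have hK2span' : ∀ {y : Ω}, y ∈ K₂ → y ∈ Submodule.span ↥M (Set.range v) := by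
    intro y hy
    exact Submodule.span_subset_span k ↥M _ (hK2span hy)
  -- Step 3: write `x` and `1` in terms of `v`.
  have hx' : x ∈ Submodule.span ↥M (Set.range v) :=
    Submodule.span_le.2 (fun z hz => hK2span' hz) hspan
  obtain ⟨c, hc⟩ := Finsupp.mem_span_range_iff_exists_finsupp.mp hx'
  obtain ⟨d, hd⟩ := Finsupp.mem_span_range_iff_exists_finsupp.mp (hK2span (one_mem K₂))
  -- Step 4: linear independence over `K₁` forces `c i = x * d i`.
  set s : Finset (Module.Basis.ofVectorSpaceIndex k ↥K₂) := c.support ∪ d.support with hs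
  have hg : ∀ i ∈ s,
      ((⟨↑(c i), hM (c i).2⟩ : ↥K₁) - ⟨x, hx⟩ * algebraMap k ↥K₁ (d i)) = 0 := by
    apply linearIndependent_iff'.mp hli s
    have e1 : ∑ i ∈ s, ((c i : Ω)) * v i = x := by
      rw [← hc]
      rw [Finsupp.sum_of_support_subset c Finset.subset_union_left _
        (fun i _ => by simp)]
      refine Finset.sum_congr rfl fun i _ => ?_
      rw [Algebra.smul_def]
      rfl
    have e2 : ∑ i ∈ s, (algebraMap k Ω (d i)) * v i = 1 := by
      rw [← hd]
      rw [Finsupp.sum_of_support_subset d Finset.subset_union_right _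
        (fun i _ => by simp)]
      refine Finset.sum_congr rfl fun i _ => ?_
      rw [Algebra.smul_def]
    have : ∑ i ∈ s, ((⟨↑(c i), hM (c i).2⟩ : ↥K₁)
        - ⟨x, hx⟩ * algebraMap k ↥K₁ (d i)) • v i = 0 := by
      have expand : ∀ i, ((⟨↑(c i), hM (c i).2⟩ : ↥K₁)
          - ⟨x, hx⟩ * algebraMap k ↥K₁ (d i)) • v i
          = (c i : Ω) * v i - x * ((algebraMap k Ω (d i)) * v i) := by
        intro i
        rw [Algebra.smul_def]
        have : (algebraMap ↥K₁ Ω) ((⟨↑(c i), hM (c i).2⟩ : ↥K₁)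
            - ⟨x, hx⟩ * algebraMap k ↥K₁ (d i))
            = (c i : Ω) - x * algebraMap k Ω (d i) := by
          rw [map_sub, map_mul, ← IsScalarTower.algebraMap_apply k ↥K₁ Ω,
            IntermediateField.algebraMap_apply, IntermediateField.algebraMap_apply]
        rw [this, sub_mul, mul_assoc]
      rw [Finset.sum_congr rfl fun i _ => expand i, Finset.sum_sub_distrib,
        ← Finset.mul_sum, e1, e2, mul_one, sub_self]
    exact this
  -- Step 5: pick `i` with `d i ≠ 0` and conclude.
  have hd0 : ∃ i, d i ≠ 0 := by
    by_contra h
    push_neg at h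
    have : d = 0 := Finsupp.ext h
    rw [this] at hd
    simp at hd
  obtain ⟨i, hi⟩ := hd0
  have his : i ∈ s := Finset.mem_union_right _ (Finsupp.mem_support_iff.2 hi)
  have := hg i his
  rw [sub_eq_zero] at this
  have heq : (c i : Ω) = x * algebraMap k Ω (d i) := by
    have h2 := congrArg (algebraMap ↥K₁ Ω) this
    rwa [map_mul, ← IsScalarTower.algebraMap_apply k ↥K₁ Ω,
      IntermediateField.algebraMap_apply, IntermediateField.algebraMap_apply] at h2
  have hne : algebraMap k Ω (d i) ≠ 0 := by
    simpa using (map_ne_zero (algebraMap k Ω)).2 hi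
  have hxeq : x = (c i : Ω) * (algebraMap k Ω (d i))⁻¹ := by
    field_simp [heq]
    exact heq.symm
  rw [hxeq]
  exact M.mul_mem (c i).2 (M.inv_mem (M.algebraMap_mem _))

end Aux

/-- If `K₁/k`, `K₂/k` are `k`-linearly disjoint purely inseparable
subextensions of finite exponent, `B₁` an `r`-basis of `K₁/k` and `B₂` an `r`-basis
of `K₂/k`, then `B₁ ∪ B₂` is an `r`-basis of `K₁(K₂)/k` and `B₁` is an `r`-basis of
`K₁(K₂)/K₂`. -/
theorem rBasis_sup_of_linearDisjoint
    (p : ℕ) [Fact p.Prime] (k Ω : Type*) [Field k] [Field Ω] [Algebra k Ω] [CharP k p]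
    [IsPurelyInseparable k Ω]
    (K₁ K₂ : IntermediateField k Ω)
    (e₁ : ℕ) (he₁ : ∀ x ∈ K₁, x ^ p ^ e₁ ∈ (algebraMap k Ω).range)
    (e₂ : ℕ) (he₂ : ∀ x ∈ K₂, x ^ p ^ e₂ ∈ (algebraMap k Ω).range)
    (hdisj : K₁.LinearDisjoint ↥K₂)
    (B₁ B₂ : Set Ω) (h₁ : RBasisRel p ⊥ K₁ B₁) (h₂ : RBasisRel p ⊥ K₂ B₂) :
    RBasisRel p ⊥ (K₁ ⊔ K₂) (B₁ ∪ B₂) ∧ RBasisRel p K₂ (K₁ ⊔ K₂) B₁ := by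
  obtain ⟨hB₁, hgen₁, hfree₁⟩ := h₁
  obtain ⟨hB₂, hgen₂, hfree₂⟩ := h₂
  rw [bot_sup_eq] at hgen₁ hgen₂
  -- generation: `K₁ ≤ pClosureOf p (K₁ ⊔ K₂) ⊔ adjoin k B₁` and symmetrically
  have hK₁le : K₁ ≤ pClosureOf p (K₁ ⊔ K₂) ⊔ adjoin k B₁ :=
    le_of_eq_of_le hgen₁.symm (sup_le_sup_right (pClosureOf_mono le_sup_left) _)
  have hK₂le : K₂ ≤ pClosureOf p (K₁ ⊔ K₂) ⊔ adjoin k B₂ :=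
    le_of_eq_of_le hgen₂.symm (sup_le_sup_right (pClosureOf_mono le_sup_right) _)
  have hadj₁ : adjoin k B₁ ≤ K₁ := adjoin_le_iff.2 hB₁
  have hadj₂ : adjoin k B₂ ≤ K₂ := adjoin_le_iff.2 hB₂
  have hpc_le : pClosureOf p (K₁ ⊔ K₂) ≤ K₁ ⊔ K₂ := pClosureOf_le_self _
  have hpc_sup : pClosureOf p (K₁ ⊔ K₂) ≤ pClosureOf p K₁ ⊔ pClosureOf p K₂ :=
    pClosureOf_sup_le K₁ K₂
  have hdisj' : K₂.LinearDisjoint K₁ := hdisj.symm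
  -- the key freeness facts
  have key₁ : ∀ x ∈ B₁, ∀ {N : IntermediateField k Ω},
      N ≤ (pClosureOf p K₁ ⊔ adjoin k (B₁ \ {x})) ⊔ K₂ → x ∉ N := by
    intro x hx N hN hxN
    set M := pClosureOf p K₁ ⊔ adjoin k (B₁ \ {x}) with hM
    have hMK₁ : M ≤ K₁ :=
      sup_le (pClosureOf_le_self K₁) (adjoin_le_iff.2 fun z hz => hB₁ hz.1)
    have hxM : x ∈ M :=
      mem_of_mem_sup_of_linearDisjoint hdisj hMK₁ (hB₁ hx) (hN hxN)
    exact hfree₁ x hx (by rwa [bot_sup_eq])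
  have key₂ : ∀ x ∈ B₂, ∀ {N : IntermediateField k Ω},
      N ≤ (pClosureOf p K₂ ⊔ adjoin k (B₂ \ {x})) ⊔ K₁ → x ∉ N := by
    intro x hx N hN hxN
    set M := pClosureOf p K₂ ⊔ adjoin k (B₂ \ {x}) with hM
    have hMK₂ : M ≤ K₂ :=
      sup_le (pClosureOf_le_self K₂) (adjoin_le_iff.2 fun z hz => hB₂ hz.1)
    have hxM : x ∈ M :=
      mem_of_mem_sup_of_linearDisjoint hdisj' hMK₂ (hB₂ hx) (hN hxN)
    exact hfree₂ x hx (by rwa [bot_sup_eq])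
  constructor
  · refine ⟨?_, ?_, ?_⟩
    · rintro z (hz | hz)
      · exact (le_sup_left : K₁ ≤ K₁ ⊔ K₂) (hB₁ hz)
      · exact (le_sup_right : K₂ ≤ K₁ ⊔ K₂) (hB₂ hz)
    · rw [bot_sup_eq]
      apply le_antisymm
      · exact sup_le hpc_le (adjoin_le_iff.2 (Set.union_subset
          (fun z hz => le_sup_left (a := K₁) (hB₁ hz))
          (fun z hz => le_sup_right (a := K₁) (hB₂ hz))))
      · apply sup_le
        · exact le_trans hK₁le (sup_le_sup_left
            (IntermediateField.adjoin.mono _ _ _ Set.subset_union_left) _)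
        · exact le_trans hK₂le (sup_le_sup_left
            (IntermediateField.adjoin.mono _ _ _ Set.subset_union_right) _)
    · rintro x (hx | hx)
      · apply key₁ x hx
        rw [bot_sup_eq]
        apply sup_le
        · exact le_trans hpc_sup (sup_le
            (le_trans le_sup_left le_sup_left)
            (le_trans (pClosureOf_le_self K₂) le_sup_right))
        · apply adjoin_le_iff.2
          rintro z ⟨hz | hz, hzx⟩
          · exact le_sup_left (a := pClosureOf p K₁ ⊔ adjoin k (B₁ \ {x}))
              (le_sup_right (a := pClosureOf p K₁)
                (IntermediateField.subset_adjoin _ _ ⟨hz, hzx⟩))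
          · exact le_sup_right (a := pClosureOf p K₁ ⊔ adjoin k (B₁ \ {x})) (hB₂ hz)
      · apply key₂ x hx
        rw [bot_sup_eq]
        apply sup_le
        · exact le_trans hpc_sup (sup_le
            (le_trans (pClosureOf_le_self K₁) le_sup_right)
            (le_trans le_sup_left le_sup_left))
        · apply adjoin_le_iff.2
          rintro z ⟨hz | hz, hzx⟩
          · exact le_sup_right (a := pClosureOf p K₂ ⊔ adjoin k (B₂ \ {x})) (hB₁ hz)
          · exact le_sup_left (a := pClosureOf p K₂ ⊔ adjoin k (B₂ \ {x}))
              (le_sup_right (a := pClosureOf p K₂)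
                (IntermediateField.subset_adjoin _ _ ⟨hz, hzx⟩))
  · refine ⟨?_, ?_, ?_⟩
    · intro z hz
      exact (le_sup_left : K₁ ≤ K₁ ⊔ K₂) (hB₁ hz)
    · apply le_antisymm
      · apply sup_le (sup_le le_sup_right hpc_le)
        exact le_trans hadj₁ le_sup_left
      · apply sup_le
        · exact le_trans hK₁le (sup_le_sup_right (le_sup_right (a := K₂)) _)
        · exact le_trans le_sup_left le_sup_left
    · intro x hx
      apply key₁ x hx
      apply sup_le
      · apply sup_le
        · exact le_sup_right
        · exact le_trans hpc_sup (sup_le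
            (le_trans le_sup_left le_sup_left)
            (le_trans (pClosureOf_le_self K₂) le_sup_right))
      · exact le_trans (le_sup_right (a := pClosureOf p K₁)) le_sup_left
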